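/- Let K ≥ 2, let θ : {1,…,K} → ℝ have a unique best arm I* (i.e., θ_{I*} > θ_j for all j ≠ I*), and let σ : {1,…,K} → ℝ be strictly positive. Then: (a) the function p ↦ min_{j ≠ I*} C_j(p) attains its maximum over the probability simplex S_K at a unique point p*; (b) p* is component-wise strictly positive; and (c) p* is the unique component-wise strictly positive vector in S_K satisfying both the information balance condition C_i(p*) = C_j(p*) for all i, j ≠ I* and the sum-of-squares balance condition (p*_{I*})²/σ_{I*}² = Σ_{j ≠ I*} (p*_j)²/σ_j². -/

import Mathlib

/-- Tangent-line inequality for the harmonic-mean-type function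
`(u,v) ↦ d²·u·v / (2(B v + A u))`, with tangent taken at positive point `(x,y)`. -/
lemma bai_tangent_le (A B x y u v d : ℝ) (hA : 0 < A) (hB : 0 < B) (hx : 0 < x) (hy : 0 < y)
    (hu : 0 ≤ u) (hv : 0 ≤ v) :
    d^2 * u * v / (2 * (B * v + A * u)) ≤
      d^2 * (B * y^2 * u + A * x^2 * v) / (2 * (B * y + A * x)^2) := by
  rcases eq_or_lt_of_le (by positivity : (0:ℝ) ≤ B * v + A * u) with h | h
  · rw [← h]
    simp only [mul_zero, div_zero]
    positivity
  · rw [div_le_div_iff₀ (by linarith) (by positivity)]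
    nlinarith [mul_nonneg (sq_nonneg d) (mul_nonneg (mul_nonneg hA.le hB.le) (sq_nonneg (y*u - x*v))), sq_nonneg (y*u - x*v)]

/-- Strict version: off proportionality the tangent inequality is strict. -/
lemma bai_tangent_lt (A B x y u v d : ℝ) (hA : 0 < A) (hB : 0 < B) (hx : 0 < x) (hy : 0 < y)
    (hu : 0 ≤ u) (hv : 0 ≤ v) (hd : d ≠ 0) (hne : y * u ≠ x * v) :
    d^2 * u * v / (2 * (B * v + A * u)) <
      d^2 * (B * y^2 * u + A * x^2 * v) / (2 * (B * y + A * x)^2) := by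
  have hd2 : 0 < d^2 := by positivity
  rcases eq_or_lt_of_le (by positivity : (0:ℝ) ≤ B * v + A * u) with h | h
  · have hu0 : u = 0 := by nlinarith
    have hv0 : v = 0 := by nlinarith
    simp [hu0, hv0] at hne
  · rw [div_lt_div_iff₀ (by linarith) (by positivity)]
    have hsq : 0 < (y*u - x*v)^2 := by
      have : y*u - x*v ≠ 0 := sub_ne_zero.mpr hne
      positivity
    nlinarith [mul_pos (mul_pos hd2 (mul_pos hA hB)) hsq]

/-- Monotonicity in the second slot. -/
lemma bai_mono (A B x y y' d : ℝ) (hA : 0 < A) (hB : 0 < B) (hx : 0 < x) (hy : 0 ≤ y)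
    (hyy : y < y') (hd : d ≠ 0) :
    d^2 * x * y / (2 * (B * y + A * x)) < d^2 * x * y' / (2 * (B * y' + A * x)) := by
  have hd2 : 0 < d^2 := by positivity
  have h1 : (0:ℝ) < 2*(B*y + A*x) := by nlinarith [mul_nonneg hB.le hy, mul_pos hA hx]
  have h2 : (0:ℝ) < 2*(B*y' + A*x) := by nlinarith [mul_pos hA hx]
  rw [div_lt_div_iff₀ h1 h2]
  nlinarith [mul_pos (mul_pos hd2 hA) (mul_pos (mul_pos hx hx) (sub_pos.mpr hyy))]

/-- Crude upper bounds. -/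
lemma bai_le_fst (A B u v d : ℝ) (hA : 0 < A) (hB : 0 < B) (hu : 0 ≤ u) (hv : 0 ≤ v) :
    d^2 * u * v / (2 * (B * v + A * u)) ≤ d^2 * u / (2 * B) := by
  rcases eq_or_lt_of_le (by positivity : (0:ℝ) ≤ B * v + A * u) with h | h
  · rw [← h]; simp only [mul_zero, div_zero]; positivity
  · rw [div_le_div_iff₀ (by linarith) (by positivity)]
    nlinarith [mul_nonneg (mul_nonneg (sq_nonneg d) hu) (mul_nonneg hA.le hu)]

lemma bai_le_snd (A B u v d : ℝ) (hA : 0 < A) (hB : 0 < B) (hu : 0 ≤ u) (hv : 0 ≤ v) :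
    d^2 * u * v / (2 * (B * v + A * u)) ≤ d^2 * v / (2 * A) := by
  rcases eq_or_lt_of_le (by positivity : (0:ℝ) ≤ B * v + A * u) with h | h
  · rw [← h]; simp only [mul_zero, div_zero]; positivity
  · rw [div_le_div_iff₀ (by linarith) (by positivity)]
    nlinarith [mul_nonneg (mul_nonneg (sq_nonneg d) hv) (mul_nonneg hB.le hv)]

/-- Derivative along a line through `(x,y)` with direction `(vx,vy)`. -/
lemma bai_hasDerivAt (A B x y vx vy d : ℝ) (hden : (0:ℝ) < B * y + A * x) :
    HasDerivAt (fun t : ℝ => d^2 * (x + t*vx) * (y + t*vy) / (2 * (B * (y + t*vy) + A * (x + t*vx))))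
      (d^2 * (B * y^2) / (2 * (B*y + A*x)^2) * vx + d^2 * (A * x^2) / (2 * (B*y + A*x)^2) * vy) 0 := by
  have h1 : HasDerivAt (fun t : ℝ => x + t*vx) vx 0 := by
    simpa using ((hasDerivAt_id (0:ℝ)).mul_const vx).const_add x
  have h2 : HasDerivAt (fun t : ℝ => y + t*vy) vy 0 := by
    simpa using ((hasDerivAt_id (0:ℝ)).mul_const vy).const_add y
  have hnum : HasDerivAt (fun t : ℝ => d^2 * (x + t*vx) * (y + t*vy))
      (d^2 * vx * y + d^2 * x * vy) 0 := by
    have := ((h1.const_mul (d^2)).fun_mul h2)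
    simpa [mul_comm, mul_assoc, mul_add, add_comm] using this
  have hden' : HasDerivAt (fun t : ℝ => 2 * (B * (y + t*vy) + A * (x + t*vx)))
      (2 * (B * vy + A * vx)) 0 := by
    have := (((h2.const_mul B).add (h1.const_mul A)).const_mul 2)
    simpa using this
  have hne : (2 * (B * (y + 0*vy) + A * (x + 0*vx))) ≠ 0 := by
    simpa using (by positivity : (2:ℝ) * (B*y + A*x) ≠ 0)
  have := hnum.fun_div hden' hne
  refine this.congr_deriv ?_
  have hd0 : B*y + A*x ≠ 0 := ne_of_gt hden
  field_simp
  ring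


lemma inf'_continuousOn {J : Type*} {X : Type*} [TopologicalSpace X] (T : Set X)
    (f : J → X → ℝ) (hf : ∀ j, ContinuousOn (f j) T) (s : Finset J) (hs : s.Nonempty) :
    ContinuousOn (fun p => s.inf' hs fun j => f j p) T := by
  induction hs using Finset.Nonempty.cons_induction with
  | singleton a => simpa using hf a
  | cons a s ha hs ih =>
      have h : (fun p => (Finset.cons a s ha).inf' (Finset.cons_nonempty ha) fun j => f j p)
          = fun p => min (f a p) (s.inf' hs fun j => f j p) := by
        funext p
        rw [Finset.inf'_cons hs]
      rw [h]
      exact continuous_min.comp_continuousOn ((hf a).prodMk ih)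



lemma eventually_lt_of_hasDerivAt_pos {f : ℝ → ℝ} {f' : ℝ} (hf : HasDerivAt f f' 0)
    (hf' : 0 < f') : ∀ᶠ t in nhdsWithin 0 (Set.Ioi 0), f 0 < f t := by
  have h := hasDerivAt_iff_tendsto_slope.mp hf
  have h2 : ∀ᶠ t in nhdsWithin (0:ℝ) {0}ᶜ, 0 < slope f 0 t :=
    h.eventually (eventually_gt_nhds hf')
  have h3 : nhdsWithin (0:ℝ) (Set.Ioi 0) ≤ nhdsWithin 0 {0}ᶜ :=
    nhdsWithin_mono 0 (fun x hx => ne_of_gt hx)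
  filter_upwards [h2.filter_mono h3, self_mem_nhdsWithin] with t ht ht0
  rw [slope_def_field] at ht
  have ht0' : (0:ℝ) < t := ht0
  rcases div_pos_iff.mp ht with ⟨h4, _⟩ | ⟨_, h5⟩
  · linarith
  · simp only [sub_pos, sub_neg] at *; linarith

lemma eventually_lt_of_continuousAt {g : ℝ → ℝ} {m : ℝ} (hg : ContinuousAt g 0)
    (h : m < g 0) : ∀ᶠ t in nhdsWithin 0 (Set.Ioi 0), m < g t :=
  (hg.eventually (eventually_gt_nhds h)).filter_mono nhdsWithin_le_nhds




lemma bai_midpoint (A B x y u v u' v' d : ℝ) (hu2 : u + u' = 2*x) (hv2 : v + v' = 2*y)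
    (hD : B*y + A*x ≠ 0) :
    d^2*(B*y^2*u + A*x^2*v)/(2*(B*y+A*x)^2) + d^2*(B*y^2*u' + A*x^2*v')/(2*(B*y+A*x)^2)
      = 2 * (d^2 * x * y / (2*(B*y+A*x))) := by
  have hu' : u' = 2*x - u := by linarith
  have hv' : v' = 2*y - v := by linarith
  subst hu' hv'
  rw [← add_div]
  field_simp
  ring

lemma bai_kkt (A B x y u v d : ℝ) (hA : 0 < A) (hB : 0 < B) (hx : 0 < x) (hy : 0 < y)
    (hd : d ≠ 0)
    (h : d^2*x*y/(2*(B*y+A*x)) < d^2*(B*y^2*u + A*x^2*v)/(2*(B*y+A*x)^2)) :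
    B*y^2/(A*x^2)*x + y < B*y^2/(A*x^2)*u + v := by
  have hD : 0 < B*y + A*x := by positivity
  have hd2 : 0 < d^2 := by positivity
  rw [div_lt_div_iff₀ (by positivity) (by positivity)] at h
  have h3 : d^2*x*y*(2*(B*y+A*x)^2) = d^2*(B*y^2*x + A*x^2*y)*(2*(B*y+A*x)) := by ring
  rw [h3] at h
  have h2D : (0:ℝ) < 2*(B*y+A*x) := by positivity
  have h2 : B*y^2*x + A*x^2*y < B*y^2*u + A*x^2*v :=
    (mul_lt_mul_iff_right₀ hd2).mp ((mul_lt_mul_iff_left₀ h2D).mp h)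
  have hAx : 0 < A*x^2 := by positivity
  have e1 : B*y^2/(A*x^2)*x + y = (B*y^2*x + A*x^2*y)/(A*x^2) := by field_simp
  have e2 : B*y^2/(A*x^2)*u + v = (B*y^2*u + A*x^2*v)/(A*x^2) := by field_simp
  rw [e1, e2]
  exact (div_lt_div_iff_of_pos_right hAx).mpr h2


set_option maxHeartbeats 2000000 in
theorem stmt2 (K : ℕ) (hK : 2 ≤ K) (θ σ : Fin K → ℝ) (Istar : Fin K)
    (hbest : ∀ j, j ≠ Istar → θ j < θ Istar) (hσ : ∀ i, 0 < σ i) :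
    let S : Set (Fin K → ℝ) := {p | (∀ i, 0 ≤ p i) ∧ ∑ i, p i = 1}
    let C : Fin K → (Fin K → ℝ) → ℝ := fun j p =>
      (θ Istar - θ j) ^ 2 * p Istar * p j / (2 * (σ Istar ^ 2 * p j + σ j ^ 2 * p Istar))
    let Γ : (Fin K → ℝ) → ℝ := fun p => ⨅ j : {j : Fin K // j ≠ Istar}, C j p
    ∃ pstar : Fin K → ℝ,
      pstar ∈ S ∧ (∀ i, 0 < pstar i) ∧ IsMaxOn Γ S pstar ∧
      (∀ q ∈ S, IsMaxOn Γ S q → q = pstar) ∧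
      (∀ i j : Fin K, i ≠ Istar → j ≠ Istar → C i pstar = C j pstar) ∧
      (pstar Istar ^ 2 / σ Istar ^ 2 =
        ∑ j ∈ Finset.univ.filter (· ≠ Istar), pstar j ^ 2 / σ j ^ 2) ∧
      (∀ q ∈ S, (∀ i, 0 < q i) →
        (∀ i j : Fin K, i ≠ Istar → j ≠ Istar → C i q = C j q) →
        (q Istar ^ 2 / σ Istar ^ 2 =
          ∑ j ∈ Finset.univ.filter (· ≠ Istar), q j ^ 2 / σ j ^ 2) →
        q = pstar) := by
  intro S C Γ
  have hnt : Nontrivial (Fin K) := Fin.nontrivial_iff_two_le.mpr hK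
  obtain ⟨j₀, hj₀⟩ := exists_ne Istar
  haveI : Nonempty {j : Fin K // j ≠ Istar} := ⟨⟨j₀, hj₀⟩⟩
  -- basic facts
  have hCdef : ∀ (j : Fin K) p, C j p =
      (θ Istar - θ j) ^ 2 * p Istar * p j /
        (2 * (σ Istar ^ 2 * p j + σ j ^ 2 * p Istar)) := fun _ _ => rfl
  have hSdef : ∀ p : Fin K → ℝ, p ∈ S ↔ (∀ i, 0 ≤ p i) ∧ ∑ i, p i = 1 := fun _ => Iff.rfl
  have hΓle : ∀ p (j : {j : Fin K // j ≠ Istar}), Γ p ≤ C j p :=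
    fun p j => ciInf_le (Set.finite_range _).bddBelow j
  have hleΓ : ∀ (p) (m : ℝ), (∀ j : {j : Fin K // j ≠ Istar}, m ≤ C j p) → m ≤ Γ p :=
    fun p m h => le_ciInf h
  have hattain : ∀ p, ∃ j : {j : Fin K // j ≠ Istar}, Γ p = C j p := by
    intro p
    obtain ⟨j, hj⟩ := Finite.exists_min (fun j : {j : Fin K // j ≠ Istar} => C j p)
    exact ⟨j, le_antisymm (hΓle p j) (hleΓ p _ hj)⟩
  have hd : ∀ j, j ≠ Istar → 0 < θ Istar - θ j := fun j hj => sub_pos.mpr (hbest j hj)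
  have hd2 : ∀ j, j ≠ Istar → (0:ℝ) < (θ Istar - θ j)^2 := fun j hj => by
    have := hd j hj; positivity
  have hσ2 : ∀ i, (0:ℝ) < σ i ^ 2 := fun i => by have := hσ i; positivity
  -- C is nonneg on nonneg vectors, and vanishes when a relevant coordinate vanishes
  have hCnonneg : ∀ (j : Fin K) (p : Fin K → ℝ), (∀ i, 0 ≤ p i) → 0 ≤ C j p := by
    intro j p hp
    rw [hCdef]
    have h1 := hp Istar; have h2 := hp j
    have h3 := (hσ2 Istar).le; have h4 := (hσ2 j).le
    positivity
  -- the uniform point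
  set uS : Fin K → ℝ := fun _ => (K:ℝ)⁻¹ with huSdef
  have hKpos : (0:ℝ) < (K:ℝ) := by exact_mod_cast Nat.lt_of_lt_of_le (by norm_num) hK
  have hKinv : (0:ℝ) < (K:ℝ)⁻¹ := by positivity
  have huS : uS ∈ S := by
    refine ⟨fun i => hKinv.le, ?_⟩
    simp [huSdef, Finset.sum_const, Finset.card_univ]
    field_simp
  have hCpos_of_pos : ∀ (j : Fin K), j ≠ Istar → ∀ p : Fin K → ℝ,
      0 < p Istar → 0 < p j → 0 < C j p := by
    intro j hj p h1 h2
    rw [hCdef]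
    have := hd2 j hj; have := hσ2 Istar; have := hσ2 j
    positivity
  have hc : 0 < Γ uS := by
    obtain ⟨j, hjeq⟩ := hattain uS
    rw [hjeq]
    exact hCpos_of_pos j j.2 uS hKinv hKinv
  -- C j q = 0 when q Istar = 0 or q j = 0
  have hCzero : ∀ (j : Fin K) (p : Fin K → ℝ), (p Istar = 0 ∨ p j = 0) → C j p = 0 := by
    intro j p hp
    rw [hCdef]
    rcases hp with h | h <;> rw [h] <;> ring_nf <;> simp
  -- every maximizer is strictly positive
  have hposmax : ∀ q ∈ S, IsMaxOn Γ S q → ∀ i, 0 < q i := by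
    intro q hq hmax i
    rcases lt_or_eq_of_le ((hSdef q).mp hq |>.1 i) with h | h
    · exact h
    exfalso
    have hcq : 0 < Γ q := lt_of_lt_of_le hc (hmax huS)
    by_cases hi : i = Istar
    · have : C j₀ q = 0 := hCzero j₀ q (Or.inl (hi ▸ h.symm))
      have := hΓle q ⟨j₀, hj₀⟩
      simp only [this] at *
      linarith [hΓle q ⟨j₀, hj₀⟩]
    · have h0 : C i q = 0 := hCzero i q (Or.inr h.symm)
      have := hΓle q ⟨i, hi⟩
      rw [h0] at this
      linarith
  -- ===== existence of a maximizer over S via compact truncation =====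
  set c := Γ uS with hcdef
  set δ : Fin K → ℝ := fun i =>
    if i = Istar then min (2 * σ Istar^2 * c / (θ Istar - θ j₀)^2) ((K:ℝ)⁻¹)
    else min (2 * σ i^2 * c / (θ Istar - θ i)^2) ((K:ℝ)⁻¹) with hδdef
  have hδpos : ∀ i, 0 < δ i := by
    intro i
    have h1 := hσ2 Istar
    rw [hδdef]
    dsimp only
    split
    · have h2 := hd2 j₀ hj₀
      exact lt_min (by positivity) hKinv
    · next hi =>
      have h2 := hd2 i hi
      have h3 := hσ2 i
      exact lt_min (by positivity) hKinv
  have hδK : ∀ i, δ i ≤ (K:ℝ)⁻¹ := by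
    intro i; rw [hδdef]; dsimp only; split <;> exact min_le_right _ _
  set T : Set (Fin K → ℝ) := {p | p ∈ S ∧ ∀ i, δ i ≤ p i} with hTdef
  have hTsub : T ⊆ S := fun p hp => hp.1
  have huT : uS ∈ T := ⟨huS, fun i => hδK i⟩
  have hTcomp : IsCompact T := by
    have h1 : T = stdSimplex ℝ (Fin K) ∩ ⋂ i, {p : Fin K → ℝ | δ i ≤ p i} := by
      ext p
      simp only [hTdef, Set.mem_inter_iff, Set.mem_iInter, Set.mem_setOf_eq]
      exact Iff.rfl
    rw [h1]
    exact (isCompact_stdSimplex ℝ (Fin K)).inter_right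
      (isClosed_iInter fun i => isClosed_le continuous_const (continuous_apply i))
  have hTpos : ∀ p ∈ T, ∀ i, 0 < p i := fun p hp i => lt_of_lt_of_le (hδpos i) (hp.2 i)
  have hCcont : ∀ j : Fin K, j ≠ Istar → ContinuousOn (C j) T := by
    intro j hj
    have hnum : Continuous fun p : Fin K → ℝ => (θ Istar - θ j)^2 * p Istar * p j :=
      (continuous_const.mul (continuous_apply Istar)).mul (continuous_apply j)
    have hden : Continuous fun p : Fin K → ℝ => 2 * (σ Istar^2 * p j + σ j^2 * p Istar) :=
      continuous_const.mul ((continuous_const.mul (continuous_apply j)).add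
        (continuous_const.mul (continuous_apply Istar)))
    refine ContinuousOn.div hnum.continuousOn hden.continuousOn ?_
    intro p hp
    have h1 := hTpos p hp Istar
    have h2 := hTpos p hp j
    have h3 := hσ2 Istar; have h4 := hσ2 j
    positivity
  have hΓinf' : ∀ p, Γ p = Finset.univ.inf' Finset.univ_nonempty
      (fun j : {j : Fin K // j ≠ Istar} => C j p) := by
    intro p
    apply le_antisymm
    · obtain ⟨j, _, hjeq⟩ := Finset.exists_mem_eq_inf' Finset.univ_nonempty
        (fun j : {j : Fin K // j ≠ Istar} => C j p)
      rw [hjeq]; exact hΓle p j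
    · exact hleΓ p _ (fun j => Finset.inf'_le _ (Finset.mem_univ j))
  have hΓcont : ContinuousOn Γ T := by
    have h := inf'_continuousOn T (fun (j : {j : Fin K // j ≠ Istar}) p => C j p)
      (fun j => hCcont j j.2) Finset.univ Finset.univ_nonempty
    exact ContinuousOn.congr h (fun p _ => hΓinf' p)
  obtain ⟨pstar, hpT, hmaxT⟩ := hTcomp.exists_isMaxOn ⟨uS, huT⟩ hΓcont
  have hpS : pstar ∈ S := hTsub hpT
  have hmaxS : IsMaxOn Γ S pstar := by
    intro p hp
    simp only [Set.mem_setOf_eq]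
    by_cases hpT' : ∀ i, δ i ≤ p i
    · exact hmaxT (⟨hp, hpT'⟩ : p ∈ T)
    · push_neg at hpT'
      obtain ⟨i, hi⟩ := hpT'
      have hple : Γ p < c := by
        have hp1 := (hSdef p).mp hp |>.1
        by_cases hii : i = Istar
        · have hi' : p Istar < δ Istar := hii ▸ hi
          have h1 : C j₀ p ≤ (θ Istar - θ j₀)^2 * p Istar / (2 * σ Istar^2) := by
            rw [hCdef]
            exact bai_le_fst _ _ _ _ _ (hσ2 j₀) (hσ2 Istar) (hp1 Istar) (hp1 j₀)
          have hdp := hd2 j₀ hj₀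
          have hsp := hσ2 Istar
          have h2 : (θ Istar - θ j₀)^2 * p Istar / (2 * σ Istar^2) < c := by
            have hδle : δ Istar ≤ 2 * σ Istar^2 * c / (θ Istar - θ j₀)^2 := by
              rw [hδdef]; dsimp only; rw [if_pos rfl]; exact min_le_left _ _
            have h3 : p Istar < 2 * σ Istar^2 * c / (θ Istar - θ j₀)^2 := lt_of_lt_of_le hi' hδle
            rw [div_lt_iff₀ (by positivity)]
            rw [lt_div_iff₀ (by positivity)] at h3
            nlinarith
          exact lt_of_le_of_lt (le_trans (hΓle p ⟨j₀, hj₀⟩) h1) h2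
        · have h1 : C i p ≤ (θ Istar - θ i)^2 * p i / (2 * σ i^2) := by
            rw [hCdef]
            exact bai_le_snd _ _ _ _ _ (hσ2 i) (hσ2 Istar) (hp1 Istar) (hp1 i)
          have hdp := hd2 i hii
          have hsp := hσ2 i
          have h2 : (θ Istar - θ i)^2 * p i / (2 * σ i^2) < c := by
            have hδle : δ i ≤ 2 * σ i^2 * c / (θ Istar - θ i)^2 := by
              rw [hδdef]; dsimp only; rw [if_neg hii]; exact min_le_left _ _
            have h3 : p i < 2 * σ i^2 * c / (θ Istar - θ i)^2 := lt_of_lt_of_le hi hδle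
            rw [div_lt_iff₀ (by positivity)]
            rw [lt_div_iff₀ (by positivity)] at h3
            nlinarith
          exact lt_of_le_of_lt (le_trans (hΓle p ⟨i, hii⟩) h1) h2
      exact hple.le.trans (hmaxT huT)
  clear hpT hmaxT hTcomp hΓcont hδpos hδK huT hTsub hTpos hCcont hΓinf' hTdef hδdef
  clear_value T δ
  classical
  -- ===== information balance at any maximizer =====
  have hinfo : ∀ q ∈ S, IsMaxOn Γ S q → ∀ j : Fin K, j ≠ Istar → C j q = Γ q := by
    intro q hq hmax j hj
    have hqpos := hposmax q hq hmax
    by_contra hne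
    have hgt : Γ q < C j q := lt_of_le_of_ne (hΓle q ⟨j, hj⟩) (Ne.symm hne)
    set Tmin : Finset (Fin K) := Finset.univ.filter (fun i => i ≠ Istar ∧ C i q = Γ q)
      with hTmindef
    have hTmem : ∀ i, i ∈ Tmin ↔ (i ≠ Istar ∧ C i q = Γ q) := by
      intro i; simp [hTmindef]
    have hTne : Tmin.Nonempty := by
      obtain ⟨j₁, hj₁⟩ := hattain q
      exact ⟨j₁.1, (hTmem j₁.1).mpr ⟨j₁.2, hj₁.symm⟩⟩
    have hjT : j ∉ Tmin := fun h => hne (((hTmem j).mp h).2)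
    have hIT : Istar ∉ Tmin := fun h => (((hTmem Istar).mp h).1) rfl
    set N : ℝ := (Tmin.card : ℝ) with hNdef
    set v : Fin K → ℝ := fun i => if i ∈ Tmin then 1 else if i = j then -N else 0 with hvdef
    have hvI : v Istar = 0 := by rw [hvdef]; simp [hIT, Ne.symm hj]
    have hvj : v j = -N := by rw [hvdef]; simp [hjT]
    have hvsum : ∑ i, v i = 0 := by
      rw [← Finset.sum_filter_add_sum_filter_not Finset.univ (· ∈ Tmin) v]
      have h1 : ∑ i ∈ Finset.univ.filter (· ∈ Tmin), v i = N := by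
        have e1 : Finset.univ.filter (· ∈ Tmin) = Tmin := by ext i; simp
        rw [e1, hvdef]
        rw [Finset.sum_congr rfl (fun i (hi : i ∈ Tmin) => if_pos hi)]
        simp [hNdef]
      have h2 : ∑ i ∈ Finset.univ.filter (fun i => ¬ i ∈ Tmin), v i = -N := by
        have e2 : ∀ i ∈ Finset.univ.filter (fun i => ¬ i ∈ Tmin), v i = if i = j then -N else 0 := by
          intro i hi
          simp only [Finset.mem_filter] at hi
          rw [hvdef]
          simp [hi.2]
        rw [Finset.sum_congr rfl e2, Finset.sum_ite_eq' _ j (fun _ => -N)]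
        simp [hjT]
      rw [h1, h2]; ring
    set pt : ℝ → (Fin K → ℝ) := fun t i => q i + t * v i with hptdef
    have hpt0 : ∀ i, pt 0 i = q i := by intro i; rw [hptdef]; simp
    have hptI : ∀ t, pt t Istar = q Istar := by intro t; rw [hptdef]; simp [hvI]
    -- eventual positivity of all coordinates
    have E1 : ∀ᶠ t in nhdsWithin (0:ℝ) (Set.Ioi 0), ∀ i, 0 < pt t i := by
      rw [Filter.eventually_all]
      intro i
      have hcont : ContinuousAt (fun t => pt t i) 0 :=
        (continuous_const.add (continuous_id.mul continuous_const)).continuousAt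
      have h0 : (0:ℝ) < pt 0 i := by rw [hpt0]; exact hqpos i
      exact eventually_lt_of_continuousAt hcont h0
    -- the perturbed C j stays above Γ q
    have E2 : ∀ᶠ t in nhdsWithin (0:ℝ) (Set.Ioi 0), Γ q < C j (pt t) := by
      have hcont : ContinuousAt (fun t => C j (pt t)) 0 := by
        have hconte : ∀ i : Fin K, ContinuousAt (fun t => pt t i) 0 :=
          fun i => (continuous_const.add (continuous_id.mul continuous_const)).continuousAt
        have hnum : ContinuousAt
            (fun t => (θ Istar - θ j)^2 * pt t Istar * pt t j) 0 :=
          (((continuousAt_const).mul (hconte Istar)).mul (hconte j))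
        have hden : ContinuousAt
            (fun t => 2 * (σ Istar^2 * pt t j + σ j^2 * pt t Istar)) 0 :=
          continuousAt_const.mul (((continuousAt_const).mul (hconte j)).add
            ((continuousAt_const).mul (hconte Istar)))
        have hden0 : 2 * (σ Istar^2 * pt 0 j + σ j^2 * pt 0 Istar) ≠ 0 := by
          rw [hpt0, hpt0]
          have := hσ2 Istar; have := hσ2 j; have := hqpos Istar; have := hqpos j
          positivity
        exact hnum.div hden hden0
      have h0 : Γ q < C j (pt 0) := by
        have : pt 0 = q := funext hpt0
        rw [this]; exact hgt
      exact eventually_lt_of_continuousAt hcont h0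
    obtain ⟨t, hAll, ht0⟩ := ((E1.and E2).and self_mem_nhdsWithin).exists
    obtain ⟨hE1, hE2⟩ := hAll
    have ht0 : (0:ℝ) < t := ht0
    have hptS : pt t ∈ S := by
      refine (hSdef (pt t)).mpr ⟨fun i => (hE1 i).le, ?_⟩
      rw [hptdef]
      simp only
      rw [Finset.sum_add_distrib, ← Finset.mul_sum, hvsum, (hSdef q).mp hq |>.2]
      ring
    -- all C values at pt t exceed Γ q
    have hall : ∀ i : Fin K, i ≠ Istar → Γ q < C i (pt t) := by
      intro i hi
      by_cases hiT : i ∈ Tmin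
      · have hvi : v i = 1 := by rw [hvdef]; simp [hiT]
        have hpti : pt t i = q i + t := by rw [hptdef]; simp [hvi]
        have hCi : C i q = Γ q := ((hTmem i).mp hiT).2
        rw [← hCi, hCdef i q, hCdef i (pt t), hptI t, hpti]
        exact bai_mono _ _ _ _ _ _ (hσ2 i) (hσ2 Istar) (hqpos Istar) (hqpos i).le
          (by linarith) (ne_of_gt (hd i hi))
      · by_cases hij : i = j
        · subst hij; exact hE2
        · have hvi : v i = 0 := by rw [hvdef]; simp [hiT, hij]
          have hpti : pt t i = q i := by rw [hptdef]; simp [hvi]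
          have hCeq : C i (pt t) = C i q := by rw [hCdef i (pt t), hCdef i q, hptI t, hpti]
          rw [hCeq]
          refine lt_of_le_of_ne (hΓle q ⟨i, hi⟩) ?_
          intro hcontra
          exact hiT ((hTmem i).mpr ⟨hi, hcontra.symm⟩)
    have : Γ q < Γ (pt t) := by
      obtain ⟨jm, hjm⟩ := hattain (pt t)
      rw [hjm]
      exact hall jm.1 jm.2
    exact absurd (hmax hptS) (not_le.mpr this)
  -- ===== sum-of-squares balance at any maximizer =====
  have hF : ∀ i : Fin K, i ∈ Finset.univ.filter (· ≠ Istar) ↔ i ≠ Istar := by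
    intro i; simp
  have hsplitsum : ∀ g : Fin K → ℝ,
      ∑ i, g i = g Istar + ∑ i ∈ Finset.univ.filter (· ≠ Istar), g i := by
    intro g
    have e1 : Finset.univ.filter (· ≠ Istar) = Finset.univ.erase Istar := by
      ext i; simp [Finset.mem_erase]
    rw [e1, ← Finset.add_sum_erase Finset.univ g (Finset.mem_univ Istar)]
  have hSOS : ∀ q ∈ S, IsMaxOn Γ S q →
      q Istar^2/σ Istar^2 = ∑ j ∈ Finset.univ.filter (· ≠ Istar), q j^2/σ j^2 := by
    intro q hq hmax
    have hqpos := hposmax q hq hmax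
    by_contra hne
    set F : Finset (Fin K) := Finset.univ.filter (· ≠ Istar) with hFdef
    have hj₀F : j₀ ∈ F := (hF j₀).mpr hj₀
    set D : Fin K → ℝ := fun i => σ Istar^2 * q i + σ i^2 * q Istar with hDdef
    have hDpos : ∀ i, 0 < D i := by
      intro i
      have := hσ2 Istar; have := hσ2 i; have := hqpos Istar; have := hqpos i
      rw [hDdef]; positivity
    set a : Fin K → ℝ := fun i => (θ Istar - θ i)^2 * (σ Istar^2 * q i^2) / (2 * (D i)^2)
      with hadef
    set b : Fin K → ℝ := fun i => (θ Istar - θ i)^2 * (σ i^2 * q Istar^2) / (2 * (D i)^2)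
      with hbdef
    have hbpos : ∀ i, i ≠ Istar → 0 < b i := by
      intro i hi
      have := hd2 i hi; have := hσ2 i; have := hqpos Istar; have := hDpos i
      rw [hbdef]; positivity
    have hapos : ∀ i, i ≠ Istar → 0 < a i := by
      intro i hi
      have := hd2 i hi; have := hσ2 Istar; have := hqpos i; have := hDpos i
      rw [hadef]; positivity
    set W : ℝ := ∑ i ∈ F, a i / b i with hWdef
    set β : ℝ := ∑ i ∈ F, 1 / b i with hβdef
    have hβpos : 0 < β := by
      rw [hβdef]
      refine Finset.sum_pos (fun i hi => ?_) ⟨j₀, hj₀F⟩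
      have := hbpos i ((hF i).mp hi); positivity
    have hab : ∀ i, i ≠ Istar → a i / b i = σ Istar^2 * q i^2 / (σ i^2 * q Istar^2) := by
      intro i hi
      have h1 := hd2 i hi; have h2 := hσ2 i; have h3 := hσ2 Istar
      have h4 := hqpos Istar; have h5 := hqpos i; have h6 := hDpos i
      rw [div_eq_div_iff (hbpos i hi).ne' (by positivity)]
      rw [hadef, hbdef]
      beta_reduce
      ring
    have hW : W ≠ 1 := by
      intro hW1
      apply hne
      have hWeq : W = σ Istar^2/q Istar^2 * ∑ i ∈ F, q i^2/σ i^2 := by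
        rw [hWdef, Finset.mul_sum]
        refine Finset.sum_congr rfl fun i hi => ?_
        rw [hab i ((hF i).mp hi), div_mul_div_comm, mul_comm (q Istar^2) (σ i^2)]
      rw [hWeq] at hW1
      have h3 := (hσ2 Istar).ne'; have h4 := (hqpos Istar).ne'
      field_simp at hW1 ⊢
      rw [div_eq_iff h3]; linear_combination -hW1
    have h1W : 1 - W ≠ 0 := sub_ne_zero_of_ne (Ne.symm hW)
    set vI : ℝ := -β / (1 - W) with hvIdef
    set v : Fin K → ℝ := fun i => if i = Istar then vI else (1 - a i * vI) / b i with hvdef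
    have hvI : v Istar = vI := by rw [hvdef]; simp
    have hvi : ∀ i, i ≠ Istar → v i = (1 - a i * vI) / b i := by
      intro i hi; rw [hvdef]; simp [hi]
    have hvsum : ∑ i, v i = 0 := by
      rw [hsplitsum v, hvI]
      have e2 : ∑ i ∈ F, v i = β - vI * W := by
        have e3 : ∀ i ∈ F, v i = 1/b i - vI * (a i / b i) := by
          intro i hi
          have hbne := (hbpos i ((hF i).mp hi)).ne'
          rw [hvi i ((hF i).mp hi)]
          field_simp
        rw [Finset.sum_congr rfl e3, Finset.sum_sub_distrib, ← Finset.mul_sum, ← hβdef, ← hWdef]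
      have hvImul : vI * (1 - W) = -β := by
        rw [hvIdef]; exact div_mul_cancel₀ (-β) h1W
      rw [e2]
      linear_combination hvImul
    set pt : ℝ → (Fin K → ℝ) := fun t i => q i + t * v i with hptdef
    have hpt0 : pt 0 = q := by funext i; rw [hptdef]; simp
    have E1 : ∀ᶠ t in nhdsWithin (0:ℝ) (Set.Ioi 0), ∀ i, 0 < pt t i := by
      rw [Filter.eventually_all]
      intro i
      have hcont : ContinuousAt (fun t => pt t i) 0 :=
        (continuous_const.add (continuous_id.mul continuous_const)).continuousAt
      have h0 : (0:ℝ) < pt 0 i := by rw [hpt0]; exact hqpos i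
      exact eventually_lt_of_continuousAt hcont h0
    have E2 : ∀ᶠ t in nhdsWithin (0:ℝ) (Set.Ioi 0),
        ∀ i : {j : Fin K // j ≠ Istar}, Γ q < C i.1 (pt t) := by
      rw [Filter.eventually_all]
      rintro ⟨i, hi⟩
      have hden : (0:ℝ) < σ Istar^2 * q i + σ i^2 * q Istar := hDpos i
      have hder := bai_hasDerivAt (σ i^2) (σ Istar^2) (q Istar) (q i)
        (v Istar) (v i) (θ Istar - θ i) hden
      have hfun : (fun t : ℝ => (θ Istar - θ i)^2 * (q Istar + t * v Istar) * (q i + t * v i) /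
          (2 * (σ Istar^2 * (q i + t * v i) + σ i^2 * (q Istar + t * v Istar))))
          = fun t => C i (pt t) := by
        funext t
        rw [hCdef]
      have hval : (θ Istar - θ i)^2 * (σ Istar^2 * (q i)^2) / (2 * (σ Istar^2 * q i + σ i^2 * q Istar)^2) * v Istar
          + (θ Istar - θ i)^2 * (σ i^2 * (q Istar)^2) / (2 * (σ Istar^2 * q i + σ i^2 * q Istar)^2) * v i = 1 := by
        have ha' : (θ Istar - θ i)^2 * (σ Istar^2 * (q i)^2) / (2 * (σ Istar^2 * q i + σ i^2 * q Istar)^2) = a i := by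
          rw [hadef, hDdef]
        have hb' : (θ Istar - θ i)^2 * (σ i^2 * (q Istar)^2) / (2 * (σ Istar^2 * q i + σ i^2 * q Istar)^2) = b i := by
          rw [hbdef, hDdef]
        rw [ha', hb', hvI, hvi i hi]
        have hbne := (hbpos i hi).ne'
        field_simp
        ring
      rw [hfun, hval] at hder
      have hev := eventually_lt_of_hasDerivAt_pos hder one_pos
      rw [hpt0] at hev
      have hCi : C i q = Γ q := hinfo q hq hmax i hi
      rw [hCi] at hev
      exact hev
    obtain ⟨t, hAll, ht0⟩ := ((E1.and E2).and self_mem_nhdsWithin).exists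
    obtain ⟨hE1, hE2⟩ := hAll
    have hptS : pt t ∈ S := by
      refine (hSdef (pt t)).mpr ⟨fun i => (hE1 i).le, ?_⟩
      rw [hptdef]
      simp only
      rw [Finset.sum_add_distrib, ← Finset.mul_sum, hvsum, (hSdef q).mp hq |>.2]
      ring
    have hlt : Γ q < Γ (pt t) := by
      obtain ⟨jm, hjm⟩ := hattain (pt t)
      rw [hjm]
      exact hE2 jm
    exact absurd (hmax hptS) (not_le.mpr hlt)
  clear_value S C Γ uS c
  -- ===== uniqueness of the maximizer =====
  have hppos : ∀ i, 0 < pstar i := hposmax pstar hpS hmaxS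
  have huniq : ∀ q ∈ S, IsMaxOn Γ S q → q = pstar := by
    intro q hq hmax
    have hqpos := hposmax q hq hmax
    have hM : Γ q = Γ pstar := le_antisymm (hmaxS hq) (hmax hpS)
    set m : Fin K → ℝ := fun i => (q i + pstar i)/2 with hmdef
    have hmpos : ∀ i, 0 < m i := by
      intro i; rw [hmdef]; have := hqpos i; have := hppos i; positivity
    have hmS : m ∈ S := by
      refine (hSdef m).mpr ⟨fun i => (hmpos i).le, ?_⟩
      rw [hmdef]
      simp only
      rw [← Finset.sum_div, Finset.sum_add_distrib, (hSdef q).mp hq |>.2,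
        (hSdef pstar).mp hpS |>.2]
      norm_num
    have hmid : ∀ j : Fin K, j ≠ Istar → ∃ Tq Tp : ℝ,
        C j q ≤ Tq ∧ C j pstar ≤ Tp ∧ Tq + Tp = 2 * C j m ∧
        (C j q = Tq → pstar j * q Istar = pstar Istar * q j) := by
      intro j hj
      refine ⟨(θ Istar - θ j)^2*(σ Istar^2*(m j)^2*(q Istar) + σ j^2*(m Istar)^2*(q j)) /
            (2*(σ Istar^2*(m j) + σ j^2*(m Istar))^2),
        (θ Istar - θ j)^2*(σ Istar^2*(m j)^2*(pstar Istar) + σ j^2*(m Istar)^2*(pstar j)) /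
            (2*(σ Istar^2*(m j) + σ j^2*(m Istar))^2), ?_, ?_, ?_, ?_⟩
      · rw [hCdef]
        exact bai_tangent_le (σ j^2) (σ Istar^2) (m Istar) (m j) (q Istar) (q j) _
          (hσ2 j) (hσ2 Istar) (hmpos Istar) (hmpos j) (hqpos Istar).le (hqpos j).le
      · rw [hCdef]
        exact bai_tangent_le (σ j^2) (σ Istar^2) (m Istar) (m j) (pstar Istar) (pstar j) _
          (hσ2 j) (hσ2 Istar) (hmpos Istar) (hmpos j) (hppos Istar).le (hppos j).le
      · have hDne : σ Istar^2 * m j + σ j^2 * m Istar ≠ 0 := by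
          have := hσ2 Istar; have := hσ2 j; have := hmpos Istar; have := hmpos j
          positivity
        rw [hCdef]
        exact bai_midpoint (σ j^2) (σ Istar^2) (m Istar) (m j) (q Istar) (q j)
          (pstar Istar) (pstar j) _ (by rw [hmdef]; ring) (by rw [hmdef]; ring) hDne
      · intro htaneq
        by_contra hneq
        have hne2 : m j * q Istar ≠ m Istar * q j := by
          intro hcontra
          apply hneq
          rw [hmdef] at hcontra
          simp only at hcontra
          linear_combination 2 * hcontra
        have hlt := bai_tangent_lt (σ j^2) (σ Istar^2) (m Istar) (m j) (q Istar) (q j)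
          (θ Istar - θ j) (hσ2 j) (hσ2 Istar) (hmpos Istar) (hmpos j)
          (hqpos Istar).le (hqpos j).le (ne_of_gt (hd j hj)) hne2
        rw [← hCdef, htaneq] at hlt
        exact lt_irrefl _ hlt
    have hmmax : IsMaxOn Γ S m := by
      have hΓm : Γ pstar ≤ Γ m := by
        apply hleΓ
        rintro ⟨j, hj⟩
        obtain ⟨Tq, Tp, h1, h2, h3, _⟩ := hmid j hj
        have h5 := hΓle q ⟨j, hj⟩
        have h6 := hΓle pstar ⟨j, hj⟩
        rw [hM] at h5
        simp only
        linarith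
      intro p hp
      exact le_trans (hmaxS hp) hΓm
    have hΓmM : Γ m = Γ pstar := le_antisymm (hmaxS hmS) (by
      apply hleΓ
      rintro ⟨j, hj⟩
      obtain ⟨Tq, Tp, h1, h2, h3, _⟩ := hmid j hj
      have h5 := hΓle q ⟨j, hj⟩
      have h6 := hΓle pstar ⟨j, hj⟩
      rw [hM] at h5
      linarith)
    have hprop : ∀ j : Fin K, j ≠ Istar → pstar j * q Istar = pstar Istar * q j := by
      intro j hj
      obtain ⟨Tq, Tp, h1, h2, h3, h4⟩ := hmid j hj
      have hCm : C j m = Γ pstar := by rw [hinfo m hmS hmmax j hj, hΓmM]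
      have h5 := hΓle q ⟨j, hj⟩
      have h6 := hΓle pstar ⟨j, hj⟩
      rw [hM] at h5
      rw [hCm] at h3
      exact h4 (le_antisymm h1 (by linarith only [h1, h2, h3, h5, h6]))
    have hpropall : ∀ i, pstar i * q Istar = pstar Istar * q i := by
      intro i
      by_cases hi : i = Istar
      · subst hi; ring
      · exact hprop i hi
    have hIeq : q Istar = pstar Istar := by
      have h1 : pstar Istar = (∑ i, q i) * pstar Istar := by
        rw [(hSdef q).mp hq |>.2]; ring
      have h2 : (∑ i, q i) * pstar Istar = ∑ i, pstar Istar * q i := by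
        rw [Finset.sum_mul]; exact Finset.sum_congr rfl (fun i _ => by ring)
      have h3 : ∑ i, pstar Istar * q i = ∑ i, pstar i * q Istar :=
        Finset.sum_congr rfl (fun i _ => (hpropall i).symm)
      have h4 : ∑ i, pstar i * q Istar = q Istar := by
        rw [← Finset.sum_mul, (hSdef pstar).mp hpS |>.2]; ring
      rw [h1, h2, h3, h4]
    funext i
    have h7 := hpropall i
    rw [hIeq] at h7
    have hpne : pstar Istar ≠ 0 := (hppos Istar).ne'
    have h8 : pstar i * pstar Istar = q i * pstar Istar := by rw [h7]; ring
    exact (mul_right_cancel₀ hpne h8).symm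
  -- ===== assembly =====
  refine ⟨pstar, hpS, hppos, hmaxS, fun q hq hqmax => huniq q hq hqmax, ?_, ?_, ?_⟩
  · intro i j hi hj
    rw [hinfo pstar hpS hmaxS i hi, hinfo pstar hpS hmaxS j hj]
  · exact hSOS pstar hpS hmaxS
  · intro q hq hqpos hbal hsos
    have hΓq : Γ q = C j₀ q :=
      le_antisymm (hΓle q ⟨j₀, hj₀⟩) (hleΓ q _ (fun j => (hbal j.1 j₀ j.2 hj₀).ge))
    have hmaxq : IsMaxOn Γ S q := by
      intro p hp
      simp only [Set.mem_setOf_eq]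
      by_contra hlt
      push_neg at hlt
      set w : Fin K → ℝ := fun i => σ Istar^2 * q i^2 / (σ i^2 * q Istar^2) with hwdef
      have hWsum : ∑ i ∈ Finset.univ.filter (· ≠ Istar), w i = 1 := by
        have e1 : ∀ i ∈ Finset.univ.filter (· ≠ Istar), w i
            = σ Istar^2/q Istar^2 * (q i^2/σ i^2) := by
          intro i hi
          rw [hwdef]
          simp only
          rw [div_mul_div_comm, mul_comm (q Istar^2) (σ i^2)]
        rw [Finset.sum_congr rfl e1, ← Finset.mul_sum, ← hsos]
        have h1 := (hσ2 Istar).ne'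
        have h2 := (hqpos Istar).ne'
        field_simp
        exact div_self (hσ Istar).ne'
      have hkey : ∀ i : Fin K, i ≠ Istar →
          w i * q Istar + q i < w i * p Istar + p i := by
        intro i hi
        have hCq : C i q < C i p := by
          rw [hbal i j₀ hi hj₀, ← hΓq]
          exact lt_of_lt_of_le hlt (hΓle p ⟨i, hi⟩)
        have htan : C i p ≤ (θ Istar - θ i)^2 * (σ Istar^2 * (q i)^2 * (p Istar)
              + σ i^2 * (q Istar)^2 * (p i)) /
            (2 * (σ Istar^2 * (q i) + σ i^2 * (q Istar))^2) := by
          rw [hCdef]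
          exact bai_tangent_le (σ i^2) (σ Istar^2) (q Istar) (q i) (p Istar) (p i) _
            (hσ2 i) (hσ2 Istar) (hqpos Istar) (hqpos i)
            ((hSdef p).mp hp |>.1 Istar) ((hSdef p).mp hp |>.1 i)
        have h2 : C i q < (θ Istar - θ i)^2 * (σ Istar^2 * (q i)^2 * (p Istar)
              + σ i^2 * (q Istar)^2 * (p i)) /
            (2 * (σ Istar^2 * (q i) + σ i^2 * (q Istar))^2) := lt_of_lt_of_le hCq htan
        rw [hCdef] at h2
        have hres := bai_kkt (σ i^2) (σ Istar^2) (q Istar) (q i) (p Istar) (p i)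
          (θ Istar - θ i) (hσ2 i) (hσ2 Istar) (hqpos Istar) (hqpos i)
          (ne_of_gt (hd i hi)) h2
        rw [hwdef]
        simp only
        exact hres
      have hsum : ∑ i ∈ Finset.univ.filter (· ≠ Istar), (w i * q Istar + q i)
          < ∑ i ∈ Finset.univ.filter (· ≠ Istar), (w i * p Istar + p i) :=
        Finset.sum_lt_sum_of_nonempty ⟨j₀, (hF j₀).mpr hj₀⟩
          (fun i hi => hkey i ((hF i).mp hi))
      have e3 : ∑ i ∈ Finset.univ.filter (· ≠ Istar), (w i * q Istar + q i) = 1 := by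
        rw [Finset.sum_add_distrib, ← Finset.sum_mul, hWsum]
        have h5 := hsplitsum q
        rw [(hSdef q).mp hq |>.2] at h5
        linarith
      have e4 : ∑ i ∈ Finset.univ.filter (· ≠ Istar), (w i * p Istar + p i) = 1 := by
        rw [Finset.sum_add_distrib, ← Finset.sum_mul, hWsum]
        have h5 := hsplitsum p
        rw [(hSdef p).mp hp |>.2] at h5
        linarith
      rw [e3, e4] at hsum
      exact lt_irrefl 1 hsum
    exact huniq q hq hmaxq
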